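/- Let d ≥ 1, sample sizes n i ≥ 1 with total N = Σ_i n i, and let X i k : Ω → ℝ (for i ∈ Fin d, k ∈ Fin (n i)) be random variables on a probability space (Ω, P) that are mutually independent and identically distributed (all with the same law). Then for every i and k, the expected rank and the expected pseudo-rank both equal (N+1)/2: ∫ R i k(ω) dP(ω) = ∫ Rψ i k(ω) dP(ω) = (N+1)/2, where R i k(ω) and Rψ i k(ω) are the rank and pseudo-rank computed from the realized observations X r ℓ(ω). -/

import Mathlib

open Finset

/-- The count function: c(u) = 0, 1/2, 1 according as u < 0, u = 0, u > 0. -/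
noncomputable def cnt (u : ℝ) : ℝ := if u < 0 then 0 else if u = 0 then 1/2 else 1

/-- The (mid-)rank of the observation `X i k` among all observations. -/
noncomputable def rnk {d : ℕ} (n : Fin d → ℕ) (X : ∀ i : Fin d, Fin (n i) → ℝ)
    (i : Fin d) (k : Fin (n i)) : ℝ :=
  1/2 + ∑ r : Fin d, ∑ l : Fin (n r), cnt (X i k - X r l)

/-- The pseudo-rank of the observation `X i k` among all observations. -/
noncomputable def psrnk {d : ℕ} (n : Fin d → ℕ) (X : ∀ i : Fin d, Fin (n i) → ℝ)
    (i : Fin d) (k : Fin (n i)) : ℝ :=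
  1/2 + ((∑ r : Fin d, (n r : ℝ)) / (d : ℝ)) *
    ∑ r : Fin d, (1 / (n r : ℝ)) * ∑ l : Fin (n r), cnt (X i k - X r l)

open MeasureTheory ProbabilityTheory


lemma cnt_measurable : Measurable cnt := by
  unfold cnt
  exact Measurable.ite (measurableSet_lt measurable_id measurable_const) measurable_const
    (Measurable.ite (measurableSet_eq_fun measurable_id measurable_const)
      measurable_const measurable_const)

lemma cnt_abs_le (u : ℝ) : ‖cnt u‖ ≤ 1 := by
  unfold cnt
  split_ifs <;> simp <;> norm_num

lemma cnt_add_neg (u : ℝ) : cnt u + cnt (-u) = 1 := by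
  unfold cnt
  rcases lt_trichotomy u 0 with h | h | h
  · simp only [if_pos h, if_neg (not_lt.mpr (neg_pos.mpr h).le), if_neg (neg_pos.mpr h).ne']
    norm_num
  · subst h; norm_num
  · simp only [if_neg (not_lt.mpr h.le), if_neg h.ne', if_pos (neg_lt_zero.mpr h)]
    norm_num

lemma cnt_zero : cnt 0 = 1/2 := by simp [cnt]

lemma integrable_cnt_pair {Ω : Type*} [MeasurableSpace Ω] (P : Measure Ω)
    [IsProbabilityMeasure P] {f g : Ω → ℝ} (hf : Measurable f) (hg : Measurable g) :
    Integrable (fun ω => cnt (f ω - g ω)) P := by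
  refine (integrable_const (1:ℝ)).mono'
    ((cnt_measurable.comp (hf.sub hg)).aestronglyMeasurable) ?_
  exact Filter.Eventually.of_forall fun ω => cnt_abs_le _

lemma key_prod (μ : Measure ℝ) [IsProbabilityMeasure μ] :
    ∫ p : ℝ × ℝ, cnt (p.1 - p.2) ∂(μ.prod μ) = 1/2 := by
  have hmeas : Measurable fun p : ℝ × ℝ => cnt (p.1 - p.2) :=
    cnt_measurable.comp (measurable_fst.sub measurable_snd)
  have hint : Integrable (fun p : ℝ × ℝ => cnt (p.1 - p.2)) (μ.prod μ) := by
    refine (integrable_const (1:ℝ)).mono' hmeas.aestronglyMeasurable ?_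
    exact Filter.Eventually.of_forall fun p => cnt_abs_le _
  have hswap : ∫ p : ℝ × ℝ, cnt (p.2 - p.1) ∂(μ.prod μ)
      = ∫ p : ℝ × ℝ, cnt (p.1 - p.2) ∂(μ.prod μ) :=
    (integral_prod_swap (fun p : ℝ × ℝ => cnt (p.1 - p.2)))
  have hintswap : Integrable (fun p : ℝ × ℝ => cnt (p.2 - p.1)) (μ.prod μ) := by
    refine (integrable_const (1:ℝ)).mono'
      ((cnt_measurable.comp (measurable_snd.sub measurable_fst)).aestronglyMeasurable) ?_
    exact Filter.Eventually.of_forall fun p => cnt_abs_le _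
  have hsum : ∫ p : ℝ × ℝ, (cnt (p.1 - p.2) + cnt (p.2 - p.1)) ∂(μ.prod μ) = 1 := by
    have : ∀ p : ℝ × ℝ, cnt (p.1 - p.2) + cnt (p.2 - p.1) = 1 := by
      intro p; have := cnt_add_neg (p.1 - p.2); rwa [neg_sub] at this
    simp [this]
  rw [integral_add hint hintswap, hswap] at hsum
  linarith

/-- For i.i.d. observations, the expected rank and expected pseudo-rank of each
observation equal `(N+1)/2`. -/
theorem expected_rank_pseudorank_iid {d : ℕ} (hd : 1 ≤ d) (n : Fin d → ℕ) (hn : ∀ i, 1 ≤ n i)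
    (N : ℕ) (hN : N = ∑ i : Fin d, n i)
    {Ω : Type*} [MeasurableSpace Ω] (P : Measure Ω) [IsProbabilityMeasure P]
    (X : ∀ i : Fin d, Fin (n i) → Ω → ℝ)
    (hmeas : ∀ i k, Measurable (X i k))
    (hindep : iIndepFun (m := fun _ : Σ i : Fin d, Fin (n i) => Real.measurableSpace)
      (fun p : Σ i : Fin d, Fin (n i) => X p.1 p.2) P)
    (μ : Measure ℝ) (hid : ∀ i k, Measure.map (X i k) P = μ)
    (i : Fin d) (k : Fin (n i)) :
    (∫ ω, rnk n (fun r l => X r l ω) i k ∂P) = ((N : ℝ) + 1) / 2 ∧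
    (∫ ω, psrnk n (fun r l => X r l ω) i k ∂P) = ((N : ℝ) + 1) / 2 := by
  haveI : IsProbabilityMeasure μ :=
    hid i k ▸ Measure.isProbabilityMeasure_map (hmeas i k).aemeasurable
  have hint : ∀ (r : Fin d) (l : Fin (n r)),
      Integrable (fun ω => cnt (X i k ω - X r l ω)) P :=
    fun r l => integrable_cnt_pair P (hmeas i k) (hmeas r l)
  have hpair : ∀ (r : Fin d) (l : Fin (n r)),
      ∫ ω, cnt (X i k ω - X r l ω) ∂P = 1/2 := by
    intro r l
    by_cases h : (⟨r, l⟩ : Σ j, Fin (n j)) = ⟨i, k⟩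
    · obtain ⟨rfl, hl⟩ := Sigma.mk.inj_iff.mp h
      rw [heq_iff_eq] at hl
      subst hl
      simp [cnt_zero]
    · have hind : IndepFun (X i k) (X r l) P := hindep.indepFun (fun he => h he.symm)
      have hmap : P.map (fun ω => (X i k ω, X r l ω)) = μ.prod μ := by
        rw [(indepFun_iff_map_prod_eq_prod_map_map (hmeas i k).aemeasurable
          (hmeas r l).aemeasurable).mp hind, hid, hid]
      have hstep : ∫ ω, cnt (X i k ω - X r l ω) ∂P
          = ∫ p : ℝ × ℝ, cnt (p.1 - p.2) ∂(μ.prod μ) := by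
        have hm2 : Measurable fun p : ℝ × ℝ => cnt (p.1 - p.2) :=
          cnt_measurable.comp (measurable_fst.sub measurable_snd)
        rw [← hmap, integral_map ((hmeas i k).prodMk (hmeas r l)).aemeasurable
          hm2.aestronglyMeasurable]
      rw [hstep]
      exact key_prod μ
  have hinner : ∀ r : Fin d,
      ∫ ω, ∑ l : Fin (n r), cnt (X i k ω - X r l ω) ∂P = (n r : ℝ) * (1/2) := by
    intro r
    rw [integral_finset_sum _ fun l _ => hint r l]
    simp [hpair]
  have hNd : (∑ r : Fin d, (n r : ℝ)) = (N : ℝ) := by rw [hN]; push_cast; ring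
  have hdne : (d : ℝ) ≠ 0 := Nat.cast_ne_zero.mpr (Nat.one_le_iff_ne_zero.mp hd)
  constructor
  · unfold rnk
    rw [integral_add (integrable_const _)
      (integrable_finset_sum _ fun r _ => integrable_finset_sum _ fun l _ => hint r l),
      integral_const, integral_finset_sum _
        (fun r _ => integrable_finset_sum _ fun l _ => hint r l)]
    simp only [hinner]
    rw [← Finset.sum_mul, hNd]
    simp
    ring
  · unfold psrnk
    have h1 : ∀ r : Fin d, Integrable
        (fun ω => (1/(n r : ℝ)) * ∑ l : Fin (n r), cnt (X i k ω - X r l ω)) P :=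
      fun r => (integrable_finset_sum _ fun l _ => hint r l).const_mul _
    rw [integral_add (integrable_const _)
      ((integrable_finset_sum _ fun r _ => h1 r).const_mul _),
      integral_const, integral_const_mul,
      integral_finset_sum _ (fun r _ => h1 r)]
    have h2 : ∀ r : Fin d,
        ∫ ω, (1/(n r : ℝ)) * ∑ l : Fin (n r), cnt (X i k ω - X r l ω) ∂P = 1/2 := by
      intro r
      rw [integral_const_mul, hinner]
      have hne : (n r : ℝ) ≠ 0 := Nat.cast_ne_zero.mpr (Nat.one_le_iff_ne_zero.mp (hn r))
      field_simp
    simp only [h2, hNd]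
    simp
    field_simp
    ring
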